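/- For every integer k ≥ 0 and every real v ∈ (0,1), one has ∫₀¹ (log(e²/s))^k / √(s(s+v)) ds ≤ 2^{k+1} · k! · Σ_{i=0}^{k+1} (log(e²/v))^i / (2^i · i!). -/

import Mathlib

open Real Finset MeasureTheory

lemma pow_log_bound (k : ℕ) {s : ℝ} (hs : 0 < s) (hs1 : s ≤ 1) :
    (2 - Real.log s) ^ k ≤ (4 * k + 2 : ℝ) ^ k * s ^ (-(1/4 : ℝ)) := by
  have hlog : Real.log s ≤ 0 := Real.log_nonpos hs.le hs1
  rcases Nat.eq_zero_or_pos k with hk | hk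
  · subst hk
    simpa using Real.one_le_rpow_of_pos_of_le_one_of_nonpos hs hs1 (by norm_num)
  · have hk0 : (k:ℝ) ≠ 0 := by positivity
    set δ : ℝ := 1 / (4 * k) with hδ
    have hδ0 : 0 < δ := by positivity
    have h1 : -Real.log s ≤ (4*k : ℝ) * s ^ (-δ) := by
      have := Real.log_le_sub_one_of_pos (x := s ^ (-δ)) (by positivity)
      rw [Real.log_rpow hs] at this
      have h4k : (0:ℝ) < 4*k := by positivity
      nlinarith [Real.rpow_pos_of_pos hs (-δ), hδ0, mul_pos h4k hδ0,
        (show (4*(k:ℝ)) * δ = 1 by rw [hδ]; field_simp)]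
    have h2 : (1:ℝ) ≤ s ^ (-δ) :=
      Real.one_le_rpow_of_pos_of_le_one_of_nonpos hs hs1 (by linarith)
    have hbase : 2 - Real.log s ≤ (4*k+2 : ℝ) * s ^ (-δ) := by nlinarith
    have hnn : (0:ℝ) ≤ 2 - Real.log s := by linarith
    calc (2 - Real.log s) ^ k ≤ ((4*k+2 : ℝ) * s ^ (-δ)) ^ k :=
          pow_le_pow_left₀ hnn hbase k
      _ = (4*k+2:ℝ)^k * (s ^ (-δ))^k := mul_pow _ _ _
      _ = (4*k+2:ℝ)^k * s ^ (-(1/4:ℝ)) := by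
          rw [← Real.rpow_natCast (s ^ (-δ)) k, ← Real.rpow_mul hs.le]
          rw [hδ]
          congr 1
          field_simp

lemma hk_integrable (k : ℕ) {c : ℝ} (hc0 : 0 ≤ c) (hc1 : c ≤ 1) :
    IntervalIntegrable (fun s => (2 - Real.log s) ^ k / Real.sqrt s) volume 0 c := by
  have h1 : IntervalIntegrable (fun s : ℝ => s ^ (-(3/4:ℝ))) volume 0 c :=
    intervalIntegral.intervalIntegrable_rpow' (by norm_num)
  have hdom := h1.const_mul ((4*k+2:ℝ)^k)
  apply hdom.mono_fun
  · exact (((measurable_const.sub Real.measurable_log).pow_const k).div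
      Real.continuous_sqrt.measurable).aestronglyMeasurable
  · rw [Filter.EventuallyLE, ae_restrict_iff' measurableSet_uIoc]
    refine Filter.Eventually.of_forall (fun s hs => ?_)
    rw [Set.uIoc_of_le hc0] at hs
    obtain ⟨hs0, hsc⟩ := hs
    have hs1 : s ≤ 1 := hsc.trans hc1
    have hlog : Real.log s ≤ 0 := Real.log_nonpos hs0.le hs1
    have hnn : (0:ℝ) ≤ (2 - Real.log s) ^ k / Real.sqrt s :=
      div_nonneg (pow_nonneg (by linarith) k) (Real.sqrt_nonneg s)
    have hnn2 : (0:ℝ) ≤ (4*k+2:ℝ)^k * s ^ (-(3/4 : ℝ)) := by positivity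
    rw [Real.norm_of_nonneg hnn, Real.norm_of_nonneg hnn2]
    have hsq : (0:ℝ) < Real.sqrt s := Real.sqrt_pos.2 hs0
    calc (2 - Real.log s) ^ k / Real.sqrt s
        ≤ ((4*k+2:ℝ)^k * s ^ (-(1/4 : ℝ))) / Real.sqrt s := by
          gcongr
          exact pow_log_bound k hs0 hs1
      _ = (4*k+2:ℝ)^k * s ^ (-(3/4 : ℝ)) := by
          rw [Real.sqrt_eq_rpow, mul_div_assoc, ← Real.rpow_sub hs0]
          norm_num

lemma hasDerivAt_S (k : ℕ) {s : ℝ} (hs : 0 < s) :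
    HasDerivAt (fun x => ∑ j ∈ range (k+1), (2 - Real.log x)^j / (2^j * (Nat.factorial j:ℝ)))
      (-(1/(2*s)) * ∑ i ∈ range k, (2 - Real.log s)^i / (2^i * (Nat.factorial i:ℝ))) s := by
  have hterm : ∀ j ∈ range (k+1),
      HasDerivAt (fun x => (2 - Real.log x)^j / (2^j * (Nat.factorial j:ℝ)))
        ((j * (2 - Real.log s)^(j-1) * -s⁻¹) / (2^j * (Nat.factorial j:ℝ))) s := by
    intro j _
    exact (((Real.hasDerivAt_log hs.ne').const_sub 2).pow j).div_const _
  have hsum := HasDerivAt.fun_sum hterm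
  convert hsum using 1
  · rfl
  · rfl
  rw [Finset.sum_range_succ']
  simp only [Nat.cast_zero, zero_mul, pow_zero, Nat.factorial_zero, Nat.cast_one, zero_div,
    add_zero]
  rw [Finset.mul_sum]
  refine Finset.sum_congr rfl (fun i _ => ?_)
  have hfact : ((Nat.factorial (i+1) : ℝ)) = (i+1) * (Nat.factorial i : ℝ) := by
    rw [Nat.factorial_succ]; push_cast; ring
  have hf0 : (Nat.factorial i : ℝ) ≠ 0 := by
    exact_mod_cast (Nat.factorial_pos i).ne'
  rw [hfact]
  push_cast [Nat.add_sub_cancel]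
  field_simp
  ring

lemma hasDerivAt_G (k : ℕ) {s : ℝ} (hs : 0 < s) :
    HasDerivAt (fun x => 2^(k+1) * (Nat.factorial k : ℝ) *
        (Real.sqrt x * ∑ j ∈ range (k+1), (2 - Real.log x)^j / (2^j * (Nat.factorial j:ℝ))))
      ((2 - Real.log s)^k / Real.sqrt s) s := by
  have h1 := ((Real.hasDerivAt_sqrt hs.ne').mul (hasDerivAt_S k hs)).const_mul
    (2^(k+1) * (Nat.factorial k : ℝ))
  convert h1 using 1
  · rfl
  · rfl
  · rfl
  have hsq : (0:ℝ) < Real.sqrt s := Real.sqrt_pos.2 hs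
  have hss : Real.sqrt s * Real.sqrt s = s := Real.mul_self_sqrt hs.le
  have hf0 : (Nat.factorial k : ℝ) ≠ 0 := by exact_mod_cast (Nat.factorial_pos k).ne'
  rw [Finset.sum_range_succ]
  set u := 2 - Real.log s with hu
  generalize hq : Real.sqrt s = a at hsq hss ⊢
  rw [← hss]
  field_simp
  ring

lemma right_integral (k : ℕ) {v : ℝ} (hv0 : 0 < v) (hv1 : v ≤ 1) :
    ∫ s in v..1, (2 - Real.log s)^k / s
      = ((2 - Real.log v)^(k+1) - 2^(k+1)) / (k+1) := by
  have hderiv : ∀ x ∈ Set.uIcc v 1,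
      HasDerivAt (fun y => -(2 - Real.log y)^(k+1) / (k+1)) ((2 - Real.log x)^k / x) x := by
    intro x hx
    rw [Set.uIcc_of_le hv1] at hx
    have hx0 : 0 < x := lt_of_lt_of_le hv0 hx.1
    have h := ((((Real.hasDerivAt_log hx0.ne').const_sub 2).pow (k+1)).neg).div_const ((k:ℝ)+1)
    convert h using 1
    · rfl
    · rfl
    · rfl
    have : (k+1) - 1 = k := rfl
    rw [this]
    push_cast
    field_simp
  have hcont : ContinuousOn (fun x => (2 - Real.log x)^k / x) (Set.uIcc v 1) := by
    rw [Set.uIcc_of_le hv1]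
    apply ContinuousOn.div
    · exact (continuousOn_const.sub (Real.continuousOn_log.mono (fun x hx =>
        (ne_of_gt (lt_of_lt_of_le hv0 hx.1))))).pow k
    · exact continuousOn_id
    · exact fun x hx => (lt_of_lt_of_le hv0 hx.1).ne'
  rw [intervalIntegral.integral_eq_sub_of_hasDerivAt hderiv
    (hcont.intervalIntegrable)]
  rw [Real.log_one]
  field_simp
  ring

lemma left_integral_le (k : ℕ) {a v : ℝ} (ha : 0 < a) (hav : a ≤ v) (hv1 : v ≤ 1) :
    ∫ s in a..v, (2 - Real.log s)^k / Real.sqrt s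
      ≤ 2^(k+1) * (Nat.factorial k:ℝ) *
        (Real.sqrt v * ∑ j ∈ range (k+1), (2 - Real.log v)^j / (2^j * (Nat.factorial j:ℝ))) := by
  have hderiv : ∀ x ∈ Set.uIcc a v,
      HasDerivAt (fun x => 2^(k+1) * (Nat.factorial k : ℝ) *
        (Real.sqrt x * ∑ j ∈ range (k+1), (2 - Real.log x)^j / (2^j * (Nat.factorial j:ℝ))))
        ((2 - Real.log x)^k / Real.sqrt x) x := by
    intro x hx
    rw [Set.uIcc_of_le hav] at hx
    exact hasDerivAt_G k (lt_of_lt_of_le ha hx.1)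
  have hcont : ContinuousOn (fun x => (2 - Real.log x)^k / Real.sqrt x) (Set.uIcc a v) := by
    rw [Set.uIcc_of_le hav]
    apply ContinuousOn.div
    · exact (continuousOn_const.sub (Real.continuousOn_log.mono (fun x hx =>
        (ne_of_gt (lt_of_lt_of_le ha hx.1))))).pow k
    · exact Real.continuous_sqrt.continuousOn
    · exact fun x hx => (Real.sqrt_pos.2 (lt_of_lt_of_le ha hx.1)).ne'
  rw [intervalIntegral.integral_eq_sub_of_hasDerivAt hderiv hcont.intervalIntegrable]
  have hnn : 0 ≤ 2^(k+1) * (Nat.factorial k : ℝ) *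
      (Real.sqrt a * ∑ j ∈ range (k+1), (2 - Real.log a)^j / (2^j * (Nat.factorial j:ℝ))) := by
    have hloga : Real.log a ≤ 0 := Real.log_nonpos ha.le (hav.trans hv1)
    have : 0 ≤ ∑ j ∈ range (k+1), (2 - Real.log a)^j / (2^j * (Nat.factorial j:ℝ)) := by
      apply Finset.sum_nonneg
      intro j _
      apply div_nonneg (pow_nonneg (by linarith) j) (by positivity)
    positivity
  linarith

lemma small_piece_le (k : ℕ) {a : ℝ} (ha0 : 0 < a) (ha1 : a ≤ 1) :
    ∫ s in (0:ℝ)..a, (2 - Real.log s)^k / Real.sqrt s ≤ (4*k+2:ℝ)^k * (4 * a ^ (1/4:ℝ)) := by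
  have hint1 : IntervalIntegrable (fun s => (2 - Real.log s)^k / Real.sqrt s) volume 0 a :=
    hk_integrable k ha0.le ha1
  have hint2 : IntervalIntegrable (fun s : ℝ => (4*k+2:ℝ)^k * s ^ (-(3/4:ℝ))) volume 0 a :=
    (intervalIntegral.intervalIntegrable_rpow' (by norm_num)).const_mul _
  have hmono : ∫ s in (0:ℝ)..a, (2 - Real.log s)^k / Real.sqrt s
      ≤ ∫ s in (0:ℝ)..a, (4*k+2:ℝ)^k * s ^ (-(3/4:ℝ)) := by
    apply intervalIntegral.integral_mono_on ha0.le hint1 hint2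
    intro s hs
    rcases eq_or_lt_of_le hs.1 with h0 | h0
    · rw [← h0]
      simp [Real.zero_rpow (by norm_num : (-(3/4:ℝ)) ≠ 0)]
    · have hs1 : s ≤ 1 := hs.2.trans ha1
      have hsq : (0:ℝ) < Real.sqrt s := Real.sqrt_pos.2 h0
      calc (2 - Real.log s) ^ k / Real.sqrt s
          ≤ ((4*k+2:ℝ)^k * s ^ (-(1/4 : ℝ))) / Real.sqrt s := by
            gcongr
            exact pow_log_bound k h0 hs1
        _ = (4*k+2:ℝ)^k * s ^ (-(3/4 : ℝ)) := by
            rw [Real.sqrt_eq_rpow, mul_div_assoc, ← Real.rpow_sub h0]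
            norm_num
  refine hmono.trans ?_
  rw [intervalIntegral.integral_const_mul, integral_rpow (Or.inl (by norm_num))]
  rw [Real.zero_rpow (by norm_num : (-(3/4:ℝ)+1) ≠ 0)]
  norm_num
  rw [show a ^ (1/4:ℝ) / (1/4) = 4 * a^(1/4:ℝ) by ring]


lemma left_improper (k : ℕ) {v : ℝ} (hv0 : 0 < v) (hv1 : v ≤ 1) :
    ∫ s in (0:ℝ)..v, (2 - Real.log s)^k / Real.sqrt s
      ≤ 2^(k+1) * (Nat.factorial k:ℝ) *
        (Real.sqrt v * ∑ j ∈ range (k+1), (2 - Real.log v)^j / (2^j * (Nat.factorial j:ℝ))) := by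
  set B := 2^(k+1) * (Nat.factorial k:ℝ) *
    (Real.sqrt v * ∑ j ∈ range (k+1), (2 - Real.log v)^j / (2^j * (Nat.factorial j:ℝ))) with hB
  have key : ∀ a ∈ Set.Ioo (0:ℝ) v,
      ∫ s in (0:ℝ)..v, (2 - Real.log s)^k / Real.sqrt s
        ≤ B + (4*k+2:ℝ)^k * (4 * a ^ (1/4:ℝ)) := by
    intro a ⟨ha0, hav⟩
    have hsplit : (∫ s in (0:ℝ)..a, (2 - Real.log s)^k / Real.sqrt s)
        + ∫ s in a..v, (2 - Real.log s)^k / Real.sqrt s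
        = ∫ s in (0:ℝ)..v, (2 - Real.log s)^k / Real.sqrt s := by
      apply intervalIntegral.integral_add_adjacent_intervals
      · exact hk_integrable k ha0.le (le_trans hav.le hv1)
      · exact ((hk_integrable k hv0.le hv1).mono_set (by
          rw [Set.uIcc_of_le hv0.le, Set.uIcc_of_le hav.le]
          exact Set.Icc_subset_Icc ha0.le le_rfl))
    rw [← hsplit]
    have h1 := small_piece_le k ha0 (le_trans hav.le hv1)
    have h2 := left_integral_le k ha0 hav.le hv1
    rw [← hB] at h2
    linarith
  have htend : Filter.Tendsto (fun a : ℝ => B + (4*k+2:ℝ)^k * (4 * a ^ (1/4:ℝ)))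
      (nhdsWithin 0 (Set.Ioi 0)) (nhds (B + (4*k+2:ℝ)^k * (4 * (0:ℝ) ^ (1/4:ℝ)))) := by
    apply Filter.Tendsto.mono_left _ nhdsWithin_le_nhds
    have h := (Real.continuousAt_rpow_const 0 (1/4) (Or.inr (by norm_num))).tendsto
    exact tendsto_const_nhds.add (((h.const_mul 4).const_mul ((4*(k:ℝ)+2)^k)).congr (by intro x; ring))
  rw [Real.zero_rpow (by norm_num : (1/4:ℝ) ≠ 0)] at htend
  norm_num at htend
  refine ge_of_tendsto htend ?_
  filter_upwards [Ioo_mem_nhdsGT_of_mem (Set.mem_Ico.mpr ⟨le_refl 0, hv0⟩)] with a ha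
  exact key a ha

theorem stmt_0 (k : ℕ) (v : ℝ) (hv : v ∈ Set.Ioo (0:ℝ) 1) :
    ∫ s in (0:ℝ)..1, (Real.log (Real.exp 2 / s)) ^ k / Real.sqrt (s * (s + v))
      ≤ 2 ^ (k + 1) * (Nat.factorial k : ℝ) *
        ∑ i ∈ Finset.range (k + 2),
          (Real.log (Real.exp 2 / v)) ^ i / (2 ^ i * (Nat.factorial i : ℝ)) := by
  obtain ⟨hv0, hv1⟩ := hv
  have hsv : (0:ℝ) < Real.sqrt v := Real.sqrt_pos.2 hv0
  have hlog : ∀ s : ℝ, 0 < s → Real.log (Real.exp 2 / s) = 2 - Real.log s := by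
    intro s hs
    rw [Real.log_div (Real.exp_ne_zero 2) hs.ne', Real.log_exp]
  -- pointwise bound on (0,1]
  have hbound : ∀ s : ℝ, 0 < s → s ≤ 1 →
      (Real.log (Real.exp 2 / s)) ^ k / Real.sqrt (s * (s + v))
        ≤ (1/Real.sqrt v) * ((2 - Real.log s)^k / Real.sqrt s) := by
    intro s hs0 hs1
    rw [hlog s hs0]
    have hnum : (0:ℝ) ≤ (2 - Real.log s)^k :=
      pow_nonneg (by have := Real.log_nonpos hs0.le hs1; linarith) k
    have h2 : (0:ℝ) < Real.sqrt (s*v) := Real.sqrt_pos.2 (by positivity)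
    calc (2 - Real.log s)^k / Real.sqrt (s*(s+v))
        ≤ (2 - Real.log s)^k / Real.sqrt (s*v) :=
          div_le_div_of_nonneg_left hnum h2 (Real.sqrt_le_sqrt (by nlinarith))
      _ = (1/Real.sqrt v) * ((2 - Real.log s)^k / Real.sqrt s) := by
          rw [Real.sqrt_mul hs0.le]
          have hss : Real.sqrt s ≠ 0 := (Real.sqrt_pos.2 hs0).ne'
          field_simp
  have hfnn : ∀ s : ℝ, 0 < s → s ≤ 1 →
      (0:ℝ) ≤ (Real.log (Real.exp 2 / s)) ^ k / Real.sqrt (s * (s + v)) := by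
    intro s hs0 hs1
    rw [hlog s hs0]
    have := Real.log_nonpos hs0.le hs1
    apply div_nonneg (pow_nonneg (by linarith) k) (Real.sqrt_nonneg _)
  -- integrability of f on [0,1]
  have hfint : IntervalIntegrable
      (fun s => (Real.log (Real.exp 2 / s)) ^ k / Real.sqrt (s * (s + v))) volume 0 1 := by
    apply ((hk_integrable k zero_le_one le_rfl).const_mul (1/Real.sqrt v)).mono_fun
    · apply Measurable.aestronglyMeasurable
      apply Measurable.div
      · exact (Real.measurable_log.comp (measurable_const.div measurable_id)).pow_const k
      · exact Real.continuous_sqrt.measurable.comp (measurable_id.mul (measurable_id.add_const v))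
    · rw [Filter.EventuallyLE, ae_restrict_iff' measurableSet_uIoc]
      refine Filter.Eventually.of_forall (fun s hs => ?_)
      rw [Set.uIoc_of_le zero_le_one] at hs
      have hg1nn : (0:ℝ) ≤ (1/Real.sqrt v) * ((2 - Real.log s)^k / Real.sqrt s) := by
        have := Real.log_nonpos hs.1.le hs.2
        have : (0:ℝ) ≤ (2 - Real.log s)^k := pow_nonneg (by linarith) k
        positivity
      rw [Real.norm_of_nonneg (hfnn s hs.1 hs.2), Real.norm_of_nonneg hg1nn]
      exact hbound s hs.1 hs.2
  have hsub1 : IntervalIntegrable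
      (fun s => (Real.log (Real.exp 2 / s)) ^ k / Real.sqrt (s * (s + v))) volume 0 v :=
    hfint.mono_set (by
      rw [Set.uIcc_of_le hv0.le, Set.uIcc_of_le zero_le_one]
      exact Set.Icc_subset_Icc le_rfl hv1.le)
  have hsub2 : IntervalIntegrable
      (fun s => (Real.log (Real.exp 2 / s)) ^ k / Real.sqrt (s * (s + v))) volume v 1 :=
    hfint.mono_set (by
      rw [Set.uIcc_of_le hv1.le, Set.uIcc_of_le zero_le_one]
      exact Set.Icc_subset_Icc hv0.le le_rfl)
  have hsplit := intervalIntegral.integral_add_adjacent_intervals hsub1 hsub2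
  -- piece 1
  have h3 : (∫ s in (0:ℝ)..v, (Real.log (Real.exp 2 / s)) ^ k / Real.sqrt (s * (s + v)))
      ≤ (1/Real.sqrt v) * ∫ s in (0:ℝ)..v, (2 - Real.log s)^k / Real.sqrt s := by
    rw [← intervalIntegral.integral_const_mul]
    apply intervalIntegral.integral_mono_on hv0.le hsub1
      ((hk_integrable k hv0.le hv1.le).const_mul _)
    intro s hs
    rcases eq_or_lt_of_le hs.1 with h0 | h0
    · rw [← h0]
      simp
    · exact hbound s h0 (hs.2.trans hv1.le)
  -- piece 2
  have hg2int : IntervalIntegrable (fun s => (2 - Real.log s)^k / s) volume v 1 := by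
    apply ContinuousOn.intervalIntegrable
    rw [Set.uIcc_of_le hv1.le]
    apply ContinuousOn.div
    · exact (continuousOn_const.sub (Real.continuousOn_log.mono (fun x hx =>
        (ne_of_gt (lt_of_lt_of_le hv0 hx.1))))).pow k
    · exact continuousOn_id
    · exact fun x hx => (lt_of_lt_of_le hv0 hx.1).ne'
  have h4 : (∫ s in v..1, (Real.log (Real.exp 2 / s)) ^ k / Real.sqrt (s * (s + v)))
      ≤ ∫ s in v..1, (2 - Real.log s)^k / s := by
    apply intervalIntegral.integral_mono_on hv1.le hsub2 hg2int
    intro s hs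
    have hs0 : 0 < s := lt_of_lt_of_le hv0 hs.1
    rw [hlog s hs0]
    have hnum : (0:ℝ) ≤ (2 - Real.log s)^k :=
      pow_nonneg (by have := Real.log_nonpos hs0.le hs.2; linarith) k
    gcongr
    calc s = Real.sqrt (s*s) := (Real.sqrt_mul_self hs0.le).symm
      _ ≤ Real.sqrt (s*(s+v)) := Real.sqrt_le_sqrt (by nlinarith)
  have h5 := right_integral k hv0 hv1.le
  have h6 := left_improper k hv0 hv1.le
  -- assemble
  rw [← hsplit]
  have hL : Real.log (Real.exp 2 / v) = 2 - Real.log v := hlog v hv0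
  rw [hL, Finset.sum_range_succ]
  set L := 2 - Real.log v with hLdef
  set S1 := ∑ j ∈ range (k+1), L^j / (2^j * (Nat.factorial j:ℝ)) with hS1
  have hS1nn : 0 ≤ S1 := by
    apply Finset.sum_nonneg
    intro j _
    have : Real.log v ≤ 0 := Real.log_nonpos hv0.le hv1.le
    exact div_nonneg (pow_nonneg (by rw [hLdef]; linarith) j) (by positivity)
  have e1 : (1/Real.sqrt v) * (2^(k+1) * (Nat.factorial k:ℝ) * (Real.sqrt v * S1))
      = 2^(k+1) * (Nat.factorial k:ℝ) * S1 := by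
    field_simp
  have e2 : (2:ℝ)^(k+1) * (Nat.factorial k:ℝ) * (L^(k+1) / (2^(k+1) * (Nat.factorial (k+1):ℝ)))
      = L^(k+1) / ((k:ℝ)+1) := by
    rw [Nat.factorial_succ]
    push_cast
    have h1 : ((Nat.factorial k:ℝ)) ≠ 0 := by exact_mod_cast (Nat.factorial_pos k).ne'
    have h2 : ((k:ℝ)+1) ≠ 0 := by positivity
    field_simp
  have e3 : ((L)^(k+1) - 2^(k+1)) / ((k:ℝ)+1) ≤ L^(k+1) / ((k:ℝ)+1) := by
    gcongr
    linarith [pow_nonneg (by norm_num : (0:ℝ) ≤ 2) (k+1)]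
  calc (∫ s in (0:ℝ)..v, (Real.log (Real.exp 2 / s)) ^ k / Real.sqrt (s * (s + v)))
        + ∫ s in v..1, (Real.log (Real.exp 2 / s)) ^ k / Real.sqrt (s * (s + v))
      ≤ (1/Real.sqrt v) * (2^(k+1) * (Nat.factorial k:ℝ) * (Real.sqrt v * S1))
        + ((L)^(k+1) - 2^(k+1)) / ((k:ℝ)+1) := by
        have := mul_le_mul_of_nonneg_left h6 (le_of_lt (by positivity : (0:ℝ) < 1/Real.sqrt v))
        have h45 : (∫ s in v..1, (Real.log (Real.exp 2 / s)) ^ k / Real.sqrt (s * (s + v)))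
            ≤ ((L)^(k+1) - 2^(k+1)) / ((k:ℝ)+1) := by
          rw [hLdef]
          calc _ ≤ _ := h4
            _ = _ := h5
        linarith
    _ ≤ 2^(k+1) * (Nat.factorial k:ℝ) * S1 + L^(k+1) / ((k:ℝ)+1) := by
        rw [e1]
        linarith [e3]
    _ = 2^(k+1) * (Nat.factorial k:ℝ) *
        (S1 + L^(k+1) / (2^(k+1) * (Nat.factorial (k+1):ℝ))) := by
        rw [mul_add, e2]
    _ = _ := by rw [mul_add]
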